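/- A symmetric positive-definite matrix M ∈ M_{2n}(ℝ) is diagonalizable in the sense of Williamson's theorem by an orthogonal symplectic matrix (i.e., there exists S with SᵀJS = J, SᵀS = I, and SᵀMS = diag(D, D) with D diagonal positive) if and only if JM = MJ. -/

import Mathlib

open Matrix
section Helpers
variable {n : ℕ}

noncomputable def realify (C : Matrix (Fin n) (Fin n) ℂ) :
    Matrix (Fin n ⊕ Fin n) (Fin n ⊕ Fin n) ℝ :=
  Matrix.fromBlocks (Matrix.of fun i j => (C i j).re) (-(Matrix.of fun i j => (C i j).im))
    (Matrix.of fun i j => (C i j).im) (Matrix.of fun i j => (C i j).re)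

lemma realify_mul (A B : Matrix (Fin n) (Fin n) ℂ) :
    realify (A * B) = realify A * realify B := by
  ext i j
  cases i <;> cases j <;>
    first
    | (simp [realify, Matrix.mul_apply, Fintype.sum_sum_type, Complex.re_sum, Complex.im_sum,
        Complex.mul_re, Complex.mul_im, Finset.sum_add_distrib, Finset.sum_sub_distrib]
       ring)
    | simp [realify, Matrix.mul_apply, Fintype.sum_sum_type, Complex.re_sum, Complex.im_sum,
        Complex.mul_re, Complex.mul_im, Finset.sum_add_distrib, Finset.sum_sub_distrib]

lemma realify_conjTranspose (A : Matrix (Fin n) (Fin n) ℂ) :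
    realify Aᴴ = (realify A)ᵀ := by
  ext i j
  cases i <;> cases j <;>
    simp [realify, Matrix.conjTranspose_apply]

lemma realify_one : realify (1 : Matrix (Fin n) (Fin n) ℂ) = 1 := by
  ext i j
  cases i <;> cases j <;>
    simp [realify, Matrix.one_apply] <;>
    first | (split <;> simp) | skip

lemma realify_diagonal (d : Fin n → ℝ) :
    realify (Matrix.diagonal (fun i => (d i : ℂ))) =
      Matrix.fromBlocks (Matrix.diagonal d) 0 0 (Matrix.diagonal d) := by
  ext i j
  cases i <;> cases j <;>
    simp [realify, Matrix.diagonal_apply] <;>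
    first | (split <;> simp) | skip

lemma realify_negI :
    realify ((-Complex.I) • (1 : Matrix (Fin n) (Fin n) ℂ)) =
      Matrix.fromBlocks 0 1 (-1) 0 := by
  ext i j
  cases i <;> cases j <;>
    simp [realify, Matrix.one_apply] <;>
    first | (split <;> simp) | skip
end Helpers

/-- A symmetric positive-definite M ∈ M_{2n}(ℝ) is Williamson
diagonalizable by an orthogonal symplectic matrix iff JM = MJ. -/
theorem stmt18 (n : ℕ)
    (M : Matrix (Fin n ⊕ Fin n) (Fin n ⊕ Fin n) ℝ)
    (hM_symm : M.IsSymm) (hM_pos : M.PosDef)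
    (J : Matrix (Fin n ⊕ Fin n) (Fin n ⊕ Fin n) ℝ)
    (hJ : J = Matrix.fromBlocks 0 1 (-1) 0) :
    (∃ (S : Matrix (Fin n ⊕ Fin n) (Fin n ⊕ Fin n) ℝ) (D : Fin n → ℝ),
      Sᵀ * J * S = J ∧ Sᵀ * S = 1 ∧ (∀ j, 0 < D j) ∧
      Sᵀ * M * S = Matrix.fromBlocks (Matrix.diagonal D) 0 0 (Matrix.diagonal D))
    ↔ J * M = M * J := by
  constructor
  · rintro ⟨S, D, hsymp, horth, hDpos, hdiag⟩
    have hS' : S * Sᵀ = 1 := mul_eq_one_comm.mp horth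
    set K := Matrix.fromBlocks (Matrix.diagonal D) 0 0 (Matrix.diagonal D) with hK
    have key : ∀ X Y : Matrix (Fin n ⊕ Fin n) (Fin n ⊕ Fin n) ℝ,
        (S * X * Sᵀ) * (S * Y * Sᵀ) = S * (X * Y) * Sᵀ := by
      intro X Y
      simp only [mul_assoc]
      rw [← mul_assoc Sᵀ S, horth, one_mul]
    have hJeq : S * J * Sᵀ = J := by
      conv_lhs => rw [← hsymp]
      simp only [mul_assoc]
      rw [hS', mul_one, ← mul_assoc, hS', one_mul]
    have hMeq : S * K * Sᵀ = M := by
      conv_lhs => rw [← hdiag]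
      simp only [mul_assoc]
      rw [hS', mul_one, ← mul_assoc, hS', one_mul]
    have hJK : J * K = K * J := by
      rw [hJ, hK, Matrix.fromBlocks_multiply, Matrix.fromBlocks_multiply]
      simp
    calc J * M = (S * J * Sᵀ) * (S * K * Sᵀ) := by rw [hJeq, hMeq]
      _ = S * (J * K) * Sᵀ := key J K
      _ = S * (K * J) * Sᵀ := by rw [hJK]
      _ = (S * K * Sᵀ) * (S * J * Sᵀ) := (key K J).symm
      _ = M * J := by rw [hJeq, hMeq]
  · intro hcomm
    set A := M.toBlocks₁₁ with hA
    set B := M.toBlocks₁₂ with hB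
    have hMblocks : M = Matrix.fromBlocks A B M.toBlocks₂₁ M.toBlocks₂₂ :=
      (Matrix.fromBlocks_toBlocks M).symm
    have hcomm' : Matrix.fromBlocks M.toBlocks₂₁ M.toBlocks₂₂ (-A) (-B)
        = Matrix.fromBlocks (-B) A (-M.toBlocks₂₂) M.toBlocks₂₁ := by
      have h1 : J * M = Matrix.fromBlocks M.toBlocks₂₁ M.toBlocks₂₂ (-A) (-B) := by
        rw [hJ]
        conv_lhs => rw [hMblocks]
        rw [Matrix.fromBlocks_multiply]
        simp
      have h2 : M * J = Matrix.fromBlocks (-B) A (-M.toBlocks₂₂) M.toBlocks₂₁ := by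
        rw [hJ]
        conv_lhs => rw [hMblocks]
        rw [Matrix.fromBlocks_multiply]
        simp
      rw [← h1, ← h2, hcomm]
    have h21 : M.toBlocks₂₁ = -B := by
      have := congrArg Matrix.toBlocks₁₁ hcomm'
      simpa [Matrix.toBlocks_fromBlocks₁₁] using this
    have h22 : M.toBlocks₂₂ = A := by
      have := congrArg Matrix.toBlocks₁₂ hcomm'
      simpa [Matrix.toBlocks_fromBlocks₁₂] using this
    have hM : M = Matrix.fromBlocks A B (-B) A := by
      rw [hMblocks, h21, h22]
    have hAsymm : Aᵀ = A := by
      have h := congrArg Matrix.toBlocks₁₁ (hM_symm : Mᵀ = M)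
      rw [hM] at h
      simpa [Matrix.fromBlocks_transpose] using h
    have hBanti : Bᵀ = -B := by
      have h := congrArg Matrix.toBlocks₁₂ (hM_symm : Mᵀ = M)
      rw [hM] at h
      rw [Matrix.fromBlocks_transpose] at h
      simp only [Matrix.toBlocks_fromBlocks₁₂, Matrix.transpose_neg] at h
      exact neg_eq_iff_eq_neg.mp h
    set H : Matrix (Fin n) (Fin n) ℂ :=
      Matrix.of (fun i j => (A i j : ℂ) - Complex.I * (B i j : ℂ)) with hH
    have hrealify : realify H = M := by
      rw [hM]
      ext i j
      cases i <;> cases j <;> simp [realify, hH]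
    have hHherm : H.IsHermitian := by
      ext i j
      have hBji : B j i = -B i j := by
        have := congrFun (congrFun hBanti i) j
        simpa [Matrix.transpose_apply] using this
      have hAji : A j i = A i j := by
        have := congrFun (congrFun hAsymm i) j
        simpa [Matrix.transpose_apply] using this
      simp [Matrix.conjTranspose_apply, hH, hAji, hBji, Complex.ext_iff]
    open scoped ComplexOrder in
    have hposdef : H.PosDef := by
      refine posDef_iff_dotProduct_mulVec.mpr ⟨hHherm, fun z hz => ?_⟩
      set v : (Fin n ⊕ Fin n) → ℝ :=
        Sum.elim (fun i => (z i).re) (fun i => (z i).im) with hv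
      have hvne : v ≠ 0 := by
        intro h0
        apply hz
        funext i
        have h1 := congrFun h0 (Sum.inl i)
        have h2 := congrFun h0 (Sum.inr i)
        simp [hv] at h1 h2
        exact Complex.ext h1 h2
      have hMv := (posDef_iff_dotProduct_mulVec.mp hM_pos).2 hvne
      rw [star_trivial] at hMv
      have hreq : (star z ⬝ᵥ H *ᵥ z).re = v ⬝ᵥ M *ᵥ v := by
        rw [hM]
        simp only [dotProduct, Matrix.mulVec, Pi.star_apply, Finset.mul_sum,
          Complex.re_sum, Fintype.sum_sum_type, Sum.elim_inl, Sum.elim_inr, hv,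
          Matrix.fromBlocks_apply₁₁, Matrix.fromBlocks_apply₁₂,
          Matrix.fromBlocks_apply₂₁, Matrix.fromBlocks_apply₂₂]
        rw [← Finset.sum_add_distrib]
        refine Finset.sum_congr rfl fun i _ => ?_
        rw [mul_add, mul_add, Finset.mul_sum, Finset.mul_sum, Finset.mul_sum, Finset.mul_sum,
          ← Finset.sum_add_distrib, ← Finset.sum_add_distrib, ← Finset.sum_add_distrib]
        refine Finset.sum_congr rfl fun j _ => ?_
        simp [hH, Complex.mul_re, Complex.mul_im, Matrix.neg_apply]
        ring
      have himz : (star z ⬝ᵥ H *ᵥ z).im = 0 := by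
        have hstar : star (star z ⬝ᵥ H *ᵥ z) = star z ⬝ᵥ H *ᵥ z := by
          rw [← star_dotProduct, Matrix.star_mulVec, ← Matrix.dotProduct_mulVec, hHherm.eq]
        have := congrArg Complex.im hstar
        simp only [Complex.star_def, Complex.conj_im] at this
        linarith
      rw [Complex.lt_def]
      refine ⟨by rw [hreq]; simpa using hMv, by simpa using himz.symm⟩
    set U : Matrix (Fin n) (Fin n) ℂ := (hHherm.eigenvectorUnitary : Matrix (Fin n) (Fin n) ℂ) with hU
    have hspec : star U * H * U = Matrix.diagonal (RCLike.ofReal ∘ hHherm.eigenvalues) :=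
      by
        have h := hHherm.conjStarAlgAut_star_eigenvectorUnitary
        rw [Unitary.conjStarAlgAut_apply, Unitary.coe_star, star_star] at h
        exact h
    have hUunit : star U * U = 1 := Unitary.coe_star_mul_self hHherm.eigenvectorUnitary
    refine ⟨realify U, hHherm.eigenvalues, ?_, ?_, fun j => hposdef.eigenvalues_pos j, ?_⟩
    · have e1 : (realify U)ᵀ * J * realify U = realify (star U * ((-Complex.I) • 1) * U) := by
        rw [realify_mul, realify_mul, realify_negI, ← hJ, ← realify_conjTranspose]
        rfl
      rw [e1]
      have e2 : star U * ((-Complex.I) • 1) * U = (-Complex.I) • (1 : Matrix (Fin n) (Fin n) ℂ) := by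
        rw [Matrix.mul_smul, Matrix.smul_mul, mul_one, hUunit]
      rw [e2, realify_negI, hJ]
    · rw [← realify_conjTranspose, ← realify_mul]
      show realify (star U * U) = 1
      rw [hUunit, realify_one]
    · rw [← hrealify, ← realify_conjTranspose, ← realify_mul, ← realify_mul]
      show realify (star U * H * U) = _
      rw [hspec]
      exact realify_diagonal _
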